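/- Let L be a bounded lattice in which the bottom element 0 is meet-irreducible (a ∧ b = 0 implies a = 0 or b = 0) or the top element 1 is join-irreducible (a ∨ b = 1 implies a = 1 or b = 1). Then for all n×n matrices A, B over L (n ≥ 2), AB = I if and only if there exists a permutation π ∈ S_n such that A = P_π and B = P_{π⁻¹}. -/

import Mathlib

/-- Multiplication of `n × n` matrices over a bounded lattice `L`:
`(A * B) i j = ⋁ k, (A i k ⊓ B k j)`. -/
def bMatMul {L : Type*} [Lattice L] [BoundedOrder L] {n : ℕ}
    (A B : Matrix (Fin n) (Fin n) L) : Matrix (Fin n) (Fin n) L :=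
  Matrix.of fun i j => Finset.univ.sup fun k => A i k ⊓ B k j

/-- The identity matrix over a bounded lattice: `1` on the diagonal, `0` elsewhere. -/
def idMat {L : Type*} [Lattice L] [BoundedOrder L] {n : ℕ} : Matrix (Fin n) (Fin n) L :=
  Matrix.of fun i j => if i = j then ⊤ else ⊥

/-- The permutation matrix of `π`: the `(i,j)` entry is `1` if `j = π i` and `0` otherwise. -/
def permMat {L : Type*} [Lattice L] [BoundedOrder L] {n : ℕ} (π : Equiv.Perm (Fin n)) :
    Matrix (Fin n) (Fin n) L :=
  Matrix.of fun i j => if j = π i then ⊤ else ⊥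

private lemma sup_eq_top_exists {L : Type*} [Lattice L] [BoundedOrder L]
    (h : ∀ a b : L, a ⊔ b = ⊤ → a = ⊤ ∨ b = ⊤) (hbt : (⊥ : L) ≠ ⊤)
    {α : Type*} [DecidableEq α] (s : Finset α) (g : α → L) (hs : s.sup g = ⊤) :
    ∃ k ∈ s, g k = ⊤ := by
  induction s using Finset.induction_on with
  | empty => simp at hs; exact absurd hs hbt
  | insert _ _ hx ih =>
    rw [Finset.sup_insert] at hs
    rcases h _ _ hs with h1 | h2
    · exact ⟨_, Finset.mem_insert_self _ _, h1⟩
    · obtain ⟨k, hk, hgk⟩ := ih h2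
      exact ⟨k, Finset.mem_insert_of_mem hk, hgk⟩

/-- Let `L` be a bounded lattice in which the bottom element is meet-irreducible or the top
element is join-irreducible. Then for `n × n` matrices `A, B` over `L` (`n ≥ 2`), `AB = I`
iff `A = P_π` and `B = P_{π⁻¹}` for some permutation `π ∈ S_n`. -/
theorem matMul_eq_id_iff_permMat {L : Type*} [Lattice L] [BoundedOrder L]
    (hirr : (∀ a b : L, a ⊓ b = ⊥ → a = ⊥ ∨ b = ⊥) ∨
            (∀ a b : L, a ⊔ b = ⊤ → a = ⊤ ∨ b = ⊤))
    {n : ℕ} (hn : 2 ≤ n) (A B : Matrix (Fin n) (Fin n) L) :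
    bMatMul A B = idMat ↔
      ∃ π : Equiv.Perm (Fin n), A = permMat π ∧ B = permMat π.symm := by
  by_cases htriv : (⊥ : L) = ⊤
  · have hall : ∀ x y : L, x = y := fun x y =>
      le_antisymm (le_top.trans (htriv ▸ bot_le)) (le_top.trans (htriv ▸ bot_le))
    constructor
    · intro _
      exact ⟨1, by ext i j; exact hall _ _, by ext i j; exact hall _ _⟩
    · intro _
      ext i j; exact hall _ _
  constructor
  · intro hAB
    have hent : ∀ i j, (Finset.univ.sup fun k => A i k ⊓ B k j) =
        (if i = j then (⊤ : L) else ⊥) := by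
      intro i j
      have := congrFun (congrFun hAB i) j
      simpa [bMatMul, idMat] using this
    have hdiag : ∀ i, (Finset.univ.sup fun k => A i k ⊓ B k i) = (⊤ : L) := by
      intro i; simpa using hent i i
    have hoff : ∀ i j, i ≠ j → ∀ k, A i k ⊓ B k j = ⊥ := by
      intro i j hij k
      have h1 : A i k ⊓ B k j ≤ Finset.univ.sup fun k => A i k ⊓ B k j :=
        Finset.le_sup (f := fun k => A i k ⊓ B k j) (Finset.mem_univ k)
      rw [hent i j, if_neg hij] at h1
      exact le_bot_iff.mp h1
    have key : ∀ i, ∃ k, (∀ i', i' ≠ i → A i' k = ⊥) ∧ (∀ j, j ≠ i → B k j = ⊥) ∧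
        A i k ≠ ⊥ := by
      intro i
      rcases hirr with hmeet | hjoin
      · -- bottom meet-irreducible
        have : ∃ k, A i k ⊓ B k i ≠ ⊥ := by
          by_contra hc
          push_neg at hc
          have : (Finset.univ.sup fun k => A i k ⊓ B k i) = (⊥ : L) :=
            le_bot_iff.mp (Finset.sup_le fun k _ => le_of_eq (hc k))
          rw [hdiag i] at this
          exact htriv this.symm
        obtain ⟨k, hk⟩ := this
        have hA : A i k ≠ ⊥ := fun h => hk (by rw [h, bot_inf_eq])
        have hB : B k i ≠ ⊥ := fun h => hk (by rw [h, inf_bot_eq])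
        refine ⟨k, fun i' hi' => ?_, fun j hj => ?_, hA⟩
        · rcases hmeet _ _ (hoff i' i hi' k) with h | h
          · exact h
          · exact absurd h hB
        · rcases hmeet _ _ (hoff i j (fun h => hj h.symm) k) with h | h
          · exact absurd h hA
          · exact h
      · -- top join-irreducible
        obtain ⟨k, -, hk⟩ := sup_eq_top_exists hjoin htriv Finset.univ
          (fun k => A i k ⊓ B k i) (hdiag i)
        have hA : A i k = ⊤ := le_antisymm le_top (hk ▸ inf_le_left)
        have hB : B k i = ⊤ := le_antisymm le_top (hk ▸ inf_le_right)
        refine ⟨k, fun i' hi' => ?_, fun j hj => ?_, by rw [hA]; exact Ne.symm htriv⟩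
        · have := hoff i' i hi' k
          rwa [hB, inf_top_eq] at this
        · have := hoff i j (fun h => hj h.symm) k
          rwa [hA, top_inf_eq] at this
    choose f hf using key
    have hinj : Function.Injective f := by
      intro i i' h
      by_contra hii
      have h1 : A i (f i') = ⊥ := (hf i').1 i hii
      rw [← h] at h1
      exact (hf i).2.2 h1
    have hbij : Function.Bijective f := (Finite.injective_iff_bijective).mp hinj
    set π : Equiv.Perm (Fin n) := Equiv.ofBijective f hbij with hπ
    have hπf : ∀ i, π i = f i := fun i => rfl
    have htop : ∀ i, A i (f i) = ⊤ ∧ B (f i) i = ⊤ := by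
      intro i
      have hsup : (Finset.univ.sup fun k => A i k ⊓ B k i) ≤ A i (f i) ⊓ B (f i) i := by
        apply Finset.sup_le
        intro k _
        by_cases hk : k = f i
        · subst hk; exact le_rfl
        · obtain ⟨i', hi'⟩ := hbij.2 k
          have hi'i : i' ≠ i := fun h => hk (by rw [← hi', h])
          rw [← hi', (hf i').1 i (Ne.symm hi'i), bot_inf_eq]
          exact bot_le
      rw [hdiag i] at hsup
      have h2 : A i (f i) ⊓ B (f i) i = ⊤ := le_antisymm le_top hsup
      exact ⟨le_antisymm le_top (h2 ▸ inf_le_left), le_antisymm le_top (h2 ▸ inf_le_right)⟩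
    refine ⟨π, ?_, ?_⟩
    · ext i j
      show A i j = if j = π i then ⊤ else ⊥
      rw [hπf]
      by_cases hj : j = f i
      · rw [if_pos hj, hj]; exact (htop i).1
      · rw [if_neg hj]
        obtain ⟨i', hi'⟩ := hbij.2 j
        have hii' : i ≠ i' := fun h => hj (by rw [← hi', ← h])
        rw [← hi']
        exact (hf i').1 i hii'
    · ext k j
      show B k j = if j = π.symm k then ⊤ else ⊥
      obtain ⟨i, hi⟩ := hbij.2 k
      have hsymm : π.symm k = i := by
        rw [← hi, ← hπf]; exact π.symm_apply_apply i
      rw [hsymm, ← hi]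
      by_cases hj : j = i
      · rw [if_pos hj, hj]; exact (htop i).2
      · rw [if_neg hj]; exact (hf i).2.1 j hj
  · rintro ⟨π, rfl, rfl⟩
    ext i j
    show (Finset.univ.sup fun k => permMat π i k ⊓ permMat π.symm k j) =
      (if i = j then (⊤ : L) else ⊥)
    have hterm : ∀ k, (permMat (L := L) π i k ⊓ permMat π.symm k j) =
        if k = π i ∧ j = i then ⊤ else ⊥ := by
      intro k
      show ((if k = π i then (⊤:L) else ⊥) ⊓ (if j = π.symm k then ⊤ else ⊥)) = _
      by_cases hk : k = π i
      · subst hk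
        simp [Equiv.symm_apply_apply]
      · simp [hk]
    simp only [hterm]
    by_cases hij : i = j
    · subst hij
      rw [if_pos rfl]
      apply le_antisymm le_top
      have := Finset.le_sup (f := fun k => if k = π i ∧ i = i then (⊤:L) else ⊥)
        (Finset.mem_univ (π i))
      simpa using this
    · rw [if_neg hij]
      apply le_bot_iff.mp ∘ id
      apply Finset.sup_le
      intro k _
      have : ¬(k = π i ∧ j = i) := fun ⟨_, h⟩ => hij h.symm
      rw [if_neg this]
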